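/- Let p be a prime with p ≡ 2 (mod 3). Then the system 3z₁² − (−p)z₂² = 15p, 3z₁² − 3(−p)z₃² = 24p has no solution in Q₃³: subtracting the equations gives −3p z₃² + p z₂² = −9p, i.e. z₂² = 3z₃² − 9, which forces 3 | z₂ and then (z₂/3)² ≡ −1 (mod 3), a contradiction. -/

import Mathlib

instance : Fact (Nat.Prime 3) := ⟨by norm_num⟩

private lemma val3 : (3 : ℚ_[3]).valuation = 1 := by
  have := Padic.valuation_p (p := 3)
  simpa using this

private lemma valsq {x : ℚ_[3]} (hx : x ≠ 0) : (x ^ 2).valuation = 2 * x.valuation := by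
  rw [sq, Padic.valuation_mul hx hx]; ring

private lemma val_eq_of_norm {x y : ℚ_[3]} (hx : x ≠ 0) (hy : y ≠ 0)
    (h : ‖x‖ = ‖y‖) : x.valuation = y.valuation := by
  rw [Padic.norm_eq_zpow_neg_valuation hx, Padic.norm_eq_zpow_neg_valuation hy] at h
  have := zpow_right_injective₀ (by norm_num : (0:ℝ) < 3) (by norm_num) (by exact_mod_cast h)
  omega

private lemma val_add_min {x y : ℚ_[3]} (hx : x ≠ 0) (hy : y ≠ 0) (hxy : x + y ≠ 0)
    (h : x.valuation ≠ y.valuation) : (x + y).valuation = min x.valuation y.valuation := by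
  have hne : ‖x‖ ≠ ‖y‖ := fun hn => h (val_eq_of_norm hx hy hn)
  have hmax : ‖x + y‖ = max ‖x‖ ‖y‖ := Padic.add_eq_max_of_ne hne
  rcases lt_or_gt_of_ne h with hlt | hlt
  · have hxy' : ‖y‖ < ‖x‖ := by
      rw [Padic.norm_eq_zpow_neg_valuation hx, Padic.norm_eq_zpow_neg_valuation hy]
      exact_mod_cast zpow_lt_zpow_right₀ (by norm_num : (1:ℝ) < 3) (by omega)
    rw [max_eq_left hxy'.le] at hmax
    rw [val_eq_of_norm hxy hx hmax]
    omega
  · have hxy' : ‖x‖ < ‖y‖ := by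
      rw [Padic.norm_eq_zpow_neg_valuation hx, Padic.norm_eq_zpow_neg_valuation hy]
      exact_mod_cast zpow_lt_zpow_right₀ (by norm_num : (1:ℝ) < 3) (by omega)
    rw [max_eq_right hxy'.le] at hmax
    rw [val_eq_of_norm hxy hy hmax]
    omega

private lemma mem_max_iff (x : ℤ_[3]) :
    x ∈ IsLocalRing.maximalIdeal ℤ_[3] ↔ ‖x‖ < 1 := by
  rw [IsLocalRing.mem_maximalIdeal, PadicInt.mem_nonunits]

/-- If `u` is a 3-adic unit, then `u² + 1` is a 3-adic unit (since `-1` is a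
non-residue mod 3). -/
private lemma unit_sq_add_one {u : ℚ_[3]} (hu : ‖u‖ = 1) : ‖u ^ 2 + 1‖ = 1 := by
  set U : ℤ_[3] := ⟨u, le_of_eq hu⟩ with hU
  have hUnorm : ‖U‖ = 1 := hu
  have hcoe : ((U ^ 2 + 1 : ℤ_[3]) : ℚ_[3]) = u ^ 2 + 1 := by
    push_cast
    rfl
  have hle : ‖U ^ 2 + 1‖ ≤ 1 := PadicInt.norm_le_one _
  rcases lt_or_eq_of_le hle with hlt | heq
  · exfalso
    have hmem : U ^ 2 + 1 ∈ IsLocalRing.maximalIdeal ℤ_[3] := (mem_max_iff _).mpr hlt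
    rw [← PadicInt.ker_toZMod, RingHom.mem_ker] at hmem
    have hU0 : PadicInt.toZMod U ≠ 0 := by
      intro h0
      have hm : U ∈ IsLocalRing.maximalIdeal ℤ_[3] := by
        rw [← PadicInt.ker_toZMod, RingHom.mem_ker]; exact h0
      have := (mem_max_iff _).mp hm
      rw [hUnorm] at this; exact absurd this (by norm_num)
    rw [map_add, map_pow, map_one] at hmem
    have hdec : ∀ x : ZMod 3, x ≠ 0 → x ^ 2 + 1 ≠ 0 := by decide
    exact hdec _ hU0 hmem
  · have h1 : ‖((U ^ 2 + 1 : ℤ_[3]) : ℚ_[3])‖ = 1 := by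
      rw [PadicInt.padic_norm_e_of_padicInt, heq]
    rwa [hcoe] at h1

private lemma key : ∀ a b : ℚ_[3], a ^ 2 + 9 ≠ 3 * b ^ 2 := by
  intro a b h
  have h9 : (9 : ℚ_[3]) = 3 * 3 := by norm_num
  have h3ne : (3 : ℚ_[3]) ≠ 0 := by norm_num
  have h9ne : (9 : ℚ_[3]) ≠ 0 := by norm_num
  have val9 : (9 : ℚ_[3]).valuation = 2 := by
    rw [h9, Padic.valuation_mul h3ne h3ne, val3]; norm_num
  by_cases hb : b = 0
  · -- a² = -9, so (a/3)² = -1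
    subst hb
    have ha : a ≠ 0 := by
      intro h0; rw [h0] at h; norm_num at h
    have ha2 : a ^ 2 = -9 := by linear_combination h
    have hna : ‖a‖ ^ 2 = ‖(3:ℚ_[3])‖ ^ 2 := by
      have hh : ‖a ^ 2‖ = ‖(9 : ℚ_[3])‖ := by rw [ha2, norm_neg]
      rw [norm_pow] at hh; rw [hh, h9, norm_mul]; ring
    have hnaeq : ‖a‖ = ‖(3:ℚ_[3])‖ := by
      nlinarith [norm_nonneg a, norm_nonneg (3:ℚ_[3])]
    have h3n : ‖(3:ℚ_[3])‖ ≠ 0 := norm_ne_zero_iff.mpr h3ne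
    have hu : ‖a / 3‖ = 1 := by
      rw [norm_div, hnaeq, div_self h3n]
    have hL := unit_sq_add_one hu
    have hz : (a / 3) ^ 2 + 1 = 0 := by
      field_simp
      linear_combination h
    rw [hz] at hL; norm_num at hL
  · by_cases ha : a = 0
    · subst ha
      have hb2 : b ^ 2 = 3 := by linear_combination -h / 3
      have hv := valsq hb
      rw [hb2, val3] at hv
      omega
    · have ha2ne : a ^ 2 ≠ 0 := pow_ne_zero _ ha
      have hb2ne : (3 : ℚ_[3]) * b ^ 2 ≠ 0 := mul_ne_zero h3ne (pow_ne_zero _ hb)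
      have hsumne : a ^ 2 + 9 ≠ 0 := by rw [h]; exact hb2ne
      have hv3b : ((3 : ℚ_[3]) * b ^ 2).valuation = 1 + 2 * b.valuation := by
        rw [Padic.valuation_mul h3ne (pow_ne_zero _ hb), val3, valsq hb]
      have hs : a.valuation = 1 := by
        by_contra hs
        have hne : (a ^ 2).valuation ≠ (9 : ℚ_[3]).valuation := by
          rw [valsq ha, val9]; omega
        have hmin := val_add_min ha2ne h9ne hsumne hne
        rw [h, hv3b, valsq ha, val9] at hmin
        omega
      set u : ℚ_[3] := a / 3 with hudef
      have hune : u ≠ 0 := div_ne_zero ha h3ne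
      have ha3u : a = 3 * u := by rw [hudef]; field_simp
      have hvu : u.valuation = 0 := by
        have hm := Padic.valuation_mul h3ne hune
        rw [← ha3u, hs, val3] at hm
        omega
      have hnu : ‖u‖ = 1 := by
        rw [Padic.norm_eq_zpow_neg_valuation hune, hvu]; norm_num
      have hL := unit_sq_add_one hnu
      have hsne : u ^ 2 + 1 ≠ 0 := by
        intro h0; rw [h0] at hL; norm_num at hL
      have hvL : (u ^ 2 + 1).valuation = 0 := by
        have := val_eq_of_norm hsne one_ne_zero (by rw [hL, norm_one])
        rwa [Padic.valuation_one] at this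
      have hb2 : b ^ 2 = 3 * (u ^ 2 + 1) := by
        rw [ha3u] at h; linear_combination -h / 3
      have hv := valsq hb
      rw [hb2, Padic.valuation_mul h3ne hsne, val3, hvL] at hv
      omega

/-- For a prime `p ≡ 2 (mod 3)`, the system corresponding to `(b₁,b₂) = (3,−p)`,
namely `3z₁² + pz₂² = 15p`, `3z₁² + 3pz₃² = 24p`, has no solution in `ℚ₃³`. -/
theorem stmt14 (p : ℕ) (hp : p.Prime) (h3 : p % 3 = 2) :
    ¬ ∃ z₁ z₂ z₃ : ℚ_[3],
      3 * z₁ ^ 2 + (p : ℚ_[3]) * z₂ ^ 2 = 15 * p ∧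
      3 * z₁ ^ 2 + 3 * (p : ℚ_[3]) * z₃ ^ 2 = 24 * p := by
  rintro ⟨z₁, z₂, z₃, h1, h2⟩
  have hp0 : (p : ℚ_[3]) ≠ 0 := Nat.cast_ne_zero.mpr hp.ne_zero
  have hkey : (p : ℚ_[3]) * (z₂ ^ 2 + 9) = (p : ℚ_[3]) * (3 * z₃ ^ 2) := by
    linear_combination h1 - h2
  exact key z₂ z₃ (mul_left_cancel₀ hp0 hkey)
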